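/- The revenue of any cooperatively envy-free outcome is at least the second-price threat: Σ_i b_i(o*) ≥ max_{o ∈ O} Σ_i max(v_i(o) − v_i(o*), 0). -/

import Mathlib

/-- **CEF revenue meets the second-price threat.**
The revenue of any cooperatively envy-free outcome is at least the
second-price threat: for every outcome `o`,
`∑ i, max (v i o − v i ostar) 0 ≤ ∑ i, b i ostar`. -/
theorem cef_second_price_threat {I O : Type*} [Fintype I] [Fintype O]
    (v : I → O → ℝ) (hv : ∀ i o, 0 ≤ v i o)
    (b : I → O → ℝ) (hb : ∀ i o, 0 ≤ b i o)
    (ostar : O)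
    (hwin : ∀ o, ∑ i, b i o ≤ ∑ i, b i ostar)
    (hcef : ∀ o, ∑ i, max ((v i o - b i o) - (v i ostar - b i ostar)) 0
      ≤ ∑ i, (b i ostar - b i o)) :
    ∀ o, ∑ i, max (v i o - v i ostar) 0 ≤ ∑ i, b i ostar := by
  intro o
  have hpt : ∀ i, max (v i o - v i ostar) 0
      ≤ max ((v i o - b i o) - (v i ostar - b i ostar)) 0 + b i o := by
    intro i
    apply max_le
    · have h1 : v i o - v i ostar ≤ ((v i o - b i o) - (v i ostar - b i ostar)) + b i o := by
        have := hb i ostar; linarith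
      calc v i o - v i ostar ≤ ((v i o - b i o) - (v i ostar - b i ostar)) + b i o := h1
        _ ≤ max ((v i o - b i o) - (v i ostar - b i ostar)) 0 + b i o := by
            gcongr; exact le_max_left _ _
    · have := hb i o
      have : (0:ℝ) ≤ max ((v i o - b i o) - (v i ostar - b i ostar)) 0 := le_max_right _ _
      linarith [hb i o]
  calc ∑ i, max (v i o - v i ostar) 0
      ≤ ∑ i, (max ((v i o - b i o) - (v i ostar - b i ostar)) 0 + b i o) :=
        Finset.sum_le_sum fun i _ => hpt i
    _ = (∑ i, max ((v i o - b i o) - (v i ostar - b i ostar)) 0) + ∑ i, b i o := by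
        rw [Finset.sum_add_distrib]
    _ ≤ (∑ i, (b i ostar - b i o)) + ∑ i, b i o := add_le_add_left (hcef o) _
    _ = ∑ i, b i ostar := by rw [Finset.sum_sub_distrib]; ring
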